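/- Fix $M \geq 1$ and $n \geq 1$. The set of reading lists $(S^1, \dots, S^n)$ with each $S^i$ a $d$-element subset of $[Md]$ (for varying $d$), partially ordered by: $S \leq T$ iff there is a strictly increasing injection $f : \mathbb{N} \to \mathbb{N}$ with $f(S^i) \subseteq T^i$ for all $i \in [n]$, contains no infinite antichain. -/

import Mathlib

/-- A reading list with a fixed number `n` of entries: a tuple `(S¹, …, Sⁿ)` where each
`Sⁱ` is a `d`-element subset of `[M·d] = {1, …, M·d}` (for some `d`). -/
structure ReadingListN (M n : ℕ) where
  d : ℕ
  S : Fin n → Finset ℕ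
  subset_range : ∀ i, S i ⊆ Finset.Icc 1 (M * d)
  card_eq : ∀ i, (S i).card = d

/-- `A ≤ B` iff there is a strictly increasing injection `f : ℕ → ℕ` with
`f(Aⁱ) ⊆ Bⁱ` for every `i ∈ [n]`. -/
def ReadingListN.le {M n : ℕ} (A B : ReadingListN M n) : Prop :=
  ∃ f : ℕ → ℕ, StrictMono f ∧ ∀ i, (A.S i).image f ⊆ B.S i

/-- Encode a reading list as a word over the alphabet `Finset (Fin n)`:
position `k` (for `k < M·d`) records the set of indices `i` with `k+1 ∈ Sⁱ`. -/
def ReadingListN.word {M n : ℕ} (A : ReadingListN M n) : List (Finset (Fin n)) :=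
  (List.range (M * A.d)).map fun k => Finset.univ.filter fun i => k + 1 ∈ A.S i

lemma ReadingListN.word_length {M n : ℕ} (A : ReadingListN M n) :
    A.word.length = M * A.d := by simp [ReadingListN.word]

lemma ReadingListN.word_get {M n : ℕ} (A : ReadingListN M n) (k : ℕ) (hk : k < A.word.length) :
    A.word.get ⟨k, hk⟩ = Finset.univ.filter fun i => k + 1 ∈ A.S i := by
  simp [ReadingListN.word]

lemma ReadingListN.le_of_word {M n : ℕ} (A B : ReadingListN M n)
    (h : List.SublistForall₂ (· ≤ ·) A.word B.word) : A.le B := by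
  rw [List.sublistForall₂_iff] at h
  obtain ⟨l, hfor, hsub⟩ := h
  rw [List.sublist_iff_exists_fin_orderEmbedding_get_eq] at hsub
  obtain ⟨e, he⟩ := hsub
  rw [List.forall₂_iff_get] at hfor
  obtain ⟨hlen, hget⟩ := hfor
  set len₁ := M * A.d with hl1
  set len₂ := M * B.d with hl2
  have hwl1 : A.word.length = len₁ := A.word_length
  have hwl2 : B.word.length = len₂ := B.word_length
  -- the embedding on positions, as a map on `Fin len₁`
  have hcast : ∀ k, k < len₁ → k < l.length := by omega
  have hlt : ∀ (k : Fin l.length), (e k : ℕ) < len₂ := fun k => hwl2 ▸ (e k).isLt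
  -- key pointwise property
  have key : ∀ (k : ℕ) (hk : k < len₁) (i : Fin n), k + 1 ∈ A.S i →
      (e ⟨k, hcast k hk⟩ : ℕ) + 1 ∈ B.S i := by
    intro k hk i hi
    have h1 := hget k (hwl1 ▸ hk) (hcast k hk)
    have h2 := he ⟨k, hcast k hk⟩
    rw [A.word_get k (hwl1 ▸ hk)] at h1
    set m : ℕ := (e ⟨k, hcast k hk⟩ : ℕ) with hm
    have hmlt : m < B.word.length := (e ⟨k, hcast k hk⟩).isLt
    rw [B.word_get m hmlt] at h2
    have : i ∈ l.get ⟨k, hcast k hk⟩ := h1 (by simp [hi])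
    rw [h2] at this
    simpa using this
  -- build the global strictly increasing map
  refine ⟨fun x => if h : 1 ≤ x ∧ x ≤ len₁ then
      (e ⟨x - 1, hcast _ (by omega)⟩ : ℕ) + 1
    else if x = 0 then 0 else len₂ + x, ?_, ?_⟩
  · intro x y hxy
    by_cases hx : 1 ≤ x ∧ x ≤ len₁ <;> by_cases hy : 1 ≤ y ∧ y ≤ len₁
    · simp only [dif_pos hx, dif_pos hy]
      have : (⟨x - 1, hcast _ (by omega)⟩ : Fin l.length) < ⟨y - 1, hcast _ (by omega)⟩ := by
        simp only [Fin.mk_lt_mk]; omega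
      simpa using e.strictMono this
    · simp only [dif_pos hx, dif_neg hy]
      have := hlt ⟨x - 1, hcast _ (by omega)⟩
      split_ifs <;> omega
    · -- x not in range but x < y ≤ len₁, so x = 0
      have hx0 : x = 0 := by omega
      simp only [dif_neg hx, dif_pos hy]
      split_ifs <;> omega
    · simp only [dif_neg hx, dif_neg hy]
      split_ifs <;> omega
  · intro i x hx
    simp only [Finset.mem_image] at hx
    obtain ⟨a, ha, rfl⟩ := hx
    have hrange := A.subset_range i ha
    rw [Finset.mem_Icc] at hrange
    have hcond : 1 ≤ a ∧ a ≤ len₁ := hrange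
    rw [dif_pos hcond]
    have : a - 1 + 1 ∈ A.S i := by
      have : a - 1 + 1 = a := by omega
      rw [this]; exact ha
    exact key (a - 1) (by omega) i this

/-- For fixed `M` and `n`, the poset of reading lists with `n` entries (and varying `d`)
contains no infinite antichain. -/
theorem readingListN_no_infinite_antichain (M n : ℕ) (hM : 1 ≤ M) (hn : 1 ≤ n) :
    ¬ ∃ g : ℕ → ReadingListN M n, ∀ i j : ℕ, i < j →
      ¬ (g i).le (g j) ∧ ¬ (g j).le (g i) := by
  rintro ⟨g, hg⟩
  have hpwo : (Set.univ : Set (Finset (Fin n))).PartiallyWellOrderedOn (· ≤ ·) :=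
    Set.finite_univ.isPWO
  have higman := hpwo.partiallyWellOrderedOn_sublistForall₂ (· ≤ ·)
  obtain ⟨i, j, hij, hle⟩ := higman.exists_lt (f := fun k => (g k).word) (fun k => by simp)
  exact (hg i j hij).1 ((g i).le_of_word (g j) hle)
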